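/- Let Ω ⊆ ℝ be compact, E ⊆ C(Ω) a subspace, and suppose {b_r} is a positive basis of E consisting of nonnegative functions. Then for each index k and each ν ∈ ℕ there exists a point ω_{kν} ∈ Ω with b_k(ω_{kν}) > 0 and 0 ≤ Σ_{i=1, i≠k}^{ν} b_i(ω_{kν})/b_k(ω_{kν}) < 1/ν; in particular b_i(ω_{kν})/b_k(ω_{kν}) → 0 for each i ≠ k. -/

import Mathlib

open Filter Topology

/-- Necessary condition: if `{b_r}` is a positive basis of a subspace `E ⊆ C(Ω)`
consisting of nonnegative functions, then for each `k` there are points `ω_{kν} ∈ Ω`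
with `b_k(ω_{kν}) > 0` and `0 ≤ Σ_{i < ν, i ≠ k} b_i(ω_{kν})/b_k(ω_{kν}) < 1/ν`;
in particular `b_i(ω_{kν})/b_k(ω_{kν}) → 0` for each `i ≠ k`. -/
theorem positive_basis_node_sequences_exist (Ω : Set ℝ) (hΩ : IsCompact Ω)
    (E : Submodule ℝ C(Ω, ℝ)) (b : ℕ → C(Ω, ℝ))
    (hbE : ∀ r, b r ∈ E) (hbpos : ∀ r (x : Ω), 0 ≤ b r x)
    (hli : LinearIndependent ℝ b) (hspan : Submodule.span ℝ (Set.range b) = E)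
    (hposbasis : ∀ f : C(Ω, ℝ), f ∈ E → (∀ x : Ω, 0 ≤ f x) →
      ∃ a : ℕ →₀ ℝ, (∀ i, 0 ≤ a i) ∧ f = a.sum fun i c => c • b i) :
    ∀ k : ℕ, ∃ ω : ℕ → Ω,
      (∀ ν : ℕ, 0 < ν → 0 < b k (ω ν) ∧
        0 ≤ ∑ i ∈ (Finset.range ν).erase k, b i (ω ν) / b k (ω ν) ∧
        ∑ i ∈ (Finset.range ν).erase k, b i (ω ν) / b k (ω ν) < 1 / (ν : ℝ)) ∧
      ∀ i, i ≠ k → Tendsto (fun ν => b i (ω ν) / b k (ω ν)) atTop (𝓝 0) := by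
  intro k
  -- Ω is nonempty, else `b 0 = 0` contradicts linear independence
  have hne : Nonempty Ω := by
    by_contra hempty
    have h0 : b 0 = 0 := by
      ext x
      exact absurd ⟨x⟩ hempty
    exact hli.ne_zero 0 h0
  -- the key existence statement for each ν
  have key : ∀ ν : ℕ, 0 < ν → ∃ x : Ω, 0 < b k x ∧
      0 ≤ ∑ i ∈ (Finset.range ν).erase k, b i x / b k x ∧
      ∑ i ∈ (Finset.range ν).erase k, b i x / b k x < 1 / (ν : ℝ) := by
    intro ν hν
    by_contra hcon
    push_neg at hcon
    have hνR : (0 : ℝ) < ν := by exact_mod_cast hν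
    -- pointwise: b k x ≤ ν * Σ b i x
    have hpt : ∀ x : Ω, b k x ≤ (ν : ℝ) * ∑ i ∈ (Finset.range ν).erase k, b i x := by
      intro x
      have hsumnn : 0 ≤ ∑ i ∈ (Finset.range ν).erase k, b i x :=
        Finset.sum_nonneg fun i _ => hbpos i x
      rcases le_or_gt (b k x) 0 with h | h
      · exact h.trans (mul_nonneg hνR.le hsumnn)
      · have hdiv : 0 ≤ ∑ i ∈ (Finset.range ν).erase k, b i x / b k x :=
          Finset.sum_nonneg fun i _ => div_nonneg (hbpos i x) h.le
        have := hcon x h hdiv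
        rw [← Finset.sum_div, div_le_div_iff₀ hνR h] at this
        nlinarith
    -- the continuous function g = ν • Σ b i - b k is nonnegative and in E
    set g : C(Ω, ℝ) := (ν : ℝ) • (∑ i ∈ (Finset.range ν).erase k, b i) - b k with hg
    have hgE : g ∈ E := by
      exact Submodule.sub_mem E (Submodule.smul_mem E _
        (Submodule.sum_mem E fun i _ => hbE i)) (hbE k)
    have hgnn : ∀ x : Ω, 0 ≤ g x := by
      intro x
      have := hpt x
      simp only [hg, ContinuousMap.sub_apply, ContinuousMap.smul_apply,
        ContinuousMap.sum_apply, smul_eq_mul]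
      linarith
    obtain ⟨a, hann, hasum⟩ := hposbasis g hgE hgnn
    -- the two representations of g agree, forcing a k = -1
    set c : ℕ →₀ ℝ :=
      (∑ i ∈ (Finset.range ν).erase k, Finsupp.single i (ν : ℝ)) - Finsupp.single k 1 with hc
    have hcg : Finsupp.linearCombination ℝ b c = g := by
      rw [hc, map_sub, map_sum]
      simp only [Finsupp.linearCombination_single, one_smul, hg, Finset.smul_sum]
    have hag : Finsupp.linearCombination ℝ b a = g := by
      rw [Finsupp.linearCombination_apply]; exact hasum.symm
    have hac : a = c := by
      have h0 : Finsupp.linearCombination ℝ b (a - c) = 0 := by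
        rw [map_sub, hcg, hag, sub_self]
      have := linearIndependent_iff.mp hli _ h0
      exact sub_eq_zero.mp this
    have hck : c k = -1 := by
      rw [hc]
      rw [Finsupp.sub_apply, Finsupp.finset_sum_apply, Finsupp.single_eq_same]
      have : ∀ i ∈ (Finset.range ν).erase k, (Finsupp.single i (ν : ℝ)) k = 0 := by
        intro i hi
        exact Finsupp.single_eq_of_ne' (Finset.ne_of_mem_erase hi)
      rw [Finset.sum_congr rfl this, Finset.sum_const_zero]
      ring
    have := hann k
    rw [hac, hck] at this
    linarith
  -- choose the points
  choose! ω hω1 hω2 hω3 using key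
  refine ⟨ω, fun ν hν => ⟨hω1 ν hν, hω2 ν hν, hω3 ν hν⟩, ?_⟩
  intro i hik
  have hbound : ∀ᶠ ν : ℕ in atTop, b i (ω ν) / b k (ω ν) ≤ 1 / (ν : ℝ) := by
    filter_upwards [eventually_ge_atTop (i + 1)] with ν hν
    have hνpos : 0 < ν := lt_of_lt_of_le (Nat.succ_pos i) hν
    have hmem : i ∈ (Finset.range ν).erase k :=
      Finset.mem_erase.mpr ⟨hik, Finset.mem_range.mpr hν⟩
    have hle : b i (ω ν) / b k (ω ν) ≤
        ∑ j ∈ (Finset.range ν).erase k, b j (ω ν) / b k (ω ν) :=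
      Finset.single_le_sum (f := fun j => b j (ω ν) / b k (ω ν))
        (fun j _ => div_nonneg (hbpos j _) (hω1 ν hνpos).le) hmem
    exact hle.trans (hω3 ν hνpos).le
  have hnn : ∀ᶠ ν : ℕ in atTop, 0 ≤ b i (ω ν) / b k (ω ν) := by
    filter_upwards [eventually_ge_atTop 1] with ν hν
    exact div_nonneg (hbpos i _) (hω1 ν hν).le
  exact squeeze_zero' hnn hbound tendsto_one_div_atTop_nhds_zero_nat
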